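/- Let C be a linear code of length n over the finite field F_q and let i ∈ {1,…,n} be a coordinate that admits a recovery set. Then loc_i(C) = min{ wt(w) − 1 : w ∈ C⊥, i ∈ supp(w) }, i.e. the minimum cardinality of a recovery set for coordinate i equals one less than the minimum weight of a dual codeword whose support contains i. -/

import Mathlib

/-- The projection map onto the coordinates in `S ⊆ {1,…,n}`. -/
def projMap (F : Type*) [Field F] {n : ℕ} (S : Finset (Fin n)) :
    (Fin n → F) →ₗ[F] ({j // j ∈ S} → F) :=
  LinearMap.funLeft F F (fun j => j.1)

/-- `dim C(S)`: the dimension of the projection of the code `C` onto the coordinates in `S`. -/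
noncomputable def projDim (F : Type*) [Field F] {n : ℕ}
    (C : Submodule F (Fin n → F)) (S : Finset (Fin n)) : ℕ :=
  Module.finrank F (C.map (projMap F S))

/-- `R` is a recovery set for coordinate `i` of the code `C`:
`i ∉ R` and `dim C(R) = dim C(R ∪ {i})`. -/
def IsRecoverySet (F : Type*) [Field F] {n : ℕ}
    (C : Submodule F (Fin n → F)) (i : Fin n) (R : Finset (Fin n)) : Prop :=
  i ∉ R ∧ projDim F C R = projDim F C (insert i R)

/-- `loc_i(C)`: the minimum cardinality of a recovery set for coordinate `i` of `C`. -/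
noncomputable def loci (F : Type*) [Field F] {n : ℕ}
    (C : Submodule F (Fin n → F)) (i : Fin n) : ℕ :=
  sInf {c : ℕ | ∃ R : Finset (Fin n), IsRecoverySet F C i R ∧ R.card = c}

/-- The Hamming weight of a vector: the number of nonzero coordinates. -/
def wt {F : Type*} [Zero F] [DecidableEq F] {n : ℕ} (x : Fin n → F) : ℕ :=
  (Finset.univ.filter fun j => x j ≠ 0).card

section Aux

variable {F : Type*} [Field F] {n : ℕ}

/-- The restriction map from coordinates `S` to coordinates `R ⊆ S`. -/
def resMap (F : Type*) [Field F] {n : ℕ} {R S : Finset (Fin n)} (h : R ⊆ S) :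
    ({j // j ∈ S} → F) →ₗ[F] ({j // j ∈ R} → F) :=
  LinearMap.funLeft F F (fun j => ⟨j.1, h j.2⟩)

lemma projMap_eq_res_comp {R S : Finset (Fin n)} (h : R ⊆ S) :
    projMap F R = (resMap F h).comp (projMap F S) := rfl

lemma map_projMap_eq {R S : Finset (Fin n)} (h : R ⊆ S) (C : Submodule F (Fin n → F)) :
    C.map (projMap F R) = (C.map (projMap F S)).map (resMap F h) := by
  rw [projMap_eq_res_comp h, Submodule.map_comp]

lemma projDim_insert_of_inj [DecidableEq (Fin n)] (C : Submodule F (Fin n → F)) (i : Fin n)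
    (R : Finset (Fin n))
    (hinj : ∀ x ∈ C, (∀ j ∈ R, x j = 0) → x i = 0) :
    projDim F C R = projDim F C (insert i R) := by
  classical
  set S := insert i R with hS
  have hsub : R ⊆ S := Finset.subset_insert i R
  set V := C.map (projMap F S) with hV
  set f := (resMap F hsub).domRestrict V with hf
  have hker : LinearMap.ker f = ⊥ := by
    rw [LinearMap.ker_eq_bot']
    rintro ⟨y, hy⟩ hy0
    obtain ⟨x, hx, rfl⟩ := hy
    have hzero : ∀ j ∈ R, x j = 0 := by
      intro j hj
      have := congrFun hy0 ⟨j, hj⟩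
      simpa [f, resMap, projMap, LinearMap.funLeft] using this
    have hxi : x i = 0 := hinj x hx hzero
    refine Subtype.ext ?_
    ext ⟨j, hj⟩
    rcases Finset.mem_insert.mp hj with rfl | hjR
    · simpa [projMap, LinearMap.funLeft] using hxi
    · simpa [projMap, LinearMap.funLeft] using hzero j hjR
  have hrn := LinearMap.finrank_range_add_finrank_ker f
  rw [hker, finrank_bot, add_zero, LinearMap.range_domRestrict] at hrn
  show Module.finrank F (C.map (projMap F R)) = Module.finrank F (C.map (projMap F S))
  rw [map_projMap_eq hsub (C := C), ← hV, hrn]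

/-- A dual codeword with `w i ≠ 0` yields a recovery set for `i`, namely
`supp(w) \ {i}`. -/
lemma recovery_of_dual [DecidableEq F] (C : Submodule F (Fin n → F)) (i : Fin n)
    (w : Fin n → F) (hdual : ∀ x ∈ C, ∑ j, w j * x j = 0) (hwi : w i ≠ 0) :
    IsRecoverySet F C i ((Finset.univ.filter fun j => w j ≠ 0).erase i) := by
  classical
  set T := Finset.univ.filter fun j => w j ≠ 0 with hT
  have hiT : i ∈ T := by simp [hT, hwi]
  have hins : insert i (T.erase i) = T := Finset.insert_erase hiT
  refine ⟨Finset.notMem_erase i T, ?_⟩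
  apply projDim_insert_of_inj
  intro x hx hzero
  have hsum := hdual x hx
  have hsplit : ∑ j, w j * x j = ∑ j ∈ T, w j * x j := by
    rw [← Finset.sum_subset (Finset.subset_univ T)]
    intro j _ hj
    have : w j = 0 := by
      by_contra h
      exact hj (by simp [hT, h])
    rw [this, zero_mul]
  rw [hsplit, ← hins, Finset.sum_insert (Finset.notMem_erase i T)] at hsum
  have hrest : ∑ j ∈ T.erase i, w j * x j = 0 := by
    apply Finset.sum_eq_zero
    intro j hj
    rw [hzero j hj, mul_zero]
  rw [hrest, add_zero] at hsum
  exact (mul_eq_zero.mp hsum).resolve_left hwi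

/-- A recovery set `R` for `i` yields a dual codeword `w` with `w i ≠ 0` and
`wt w - 1 ≤ |R|`. -/
lemma dual_of_recovery [DecidableEq F] (C : Submodule F (Fin n → F)) (i : Fin n)
    (R : Finset (Fin n)) (h : IsRecoverySet F C i R) :
    ∃ w : Fin n → F, (∀ x ∈ C, ∑ j, w j * x j = 0) ∧ w i ≠ 0 ∧ wt w - 1 ≤ R.card := by
  classical
  obtain ⟨hiR, hdim⟩ := h
  set S := insert i R with hS
  have hsub : R ⊆ S := Finset.subset_insert i R
  set V := C.map (projMap F S) with hV
  set f := (resMap F hsub).domRestrict V with hf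
  -- from the dimension equality, f is injective
  have hrn := LinearMap.finrank_range_add_finrank_ker f
  rw [LinearMap.range_domRestrict] at hrn
  have hdim' : Module.finrank F (Submodule.map (resMap F hsub) V)
      = Module.finrank F V := by
    rw [hV, ← map_projMap_eq hsub (C := C)]
    unfold projDim at hdim
    exact hdim
  have hker0 : Module.finrank F (LinearMap.ker f) = 0 := by omega
  have hker : LinearMap.ker f = ⊥ := Submodule.finrank_eq_zero.mp hker0
  -- the vector δ = projection of e_i is not in V
  set δ : {j // j ∈ S} → F := projMap F S (Pi.single i 1) with hδ
  have hiS : i ∈ S := Finset.mem_insert_self i R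
  have hδi : δ ⟨i, hiS⟩ = 1 := by simp [hδ, projMap, LinearMap.funLeft]
  have hδnot : δ ∉ V := by
    intro hδV
    have hres : f ⟨δ, hδV⟩ = 0 := by
      ext ⟨j, hj⟩
      have hji : j ≠ i := fun hji => hiR (hji ▸ hj)
      simp [f, resMap, LinearMap.funLeft, hδ, projMap, Pi.single_apply, hji]
    have : (⟨δ, hδV⟩ : V) = 0 := by
      rw [LinearMap.ker_eq_bot'] at hker
      exact hker _ hres
    have : δ = 0 := Subtype.ext_iff.mp this
    rw [this] at hδi
    simp at hδi
  obtain ⟨φ, hφδ, hφV⟩ := Submodule.exists_dual_map_eq_bot_of_notMem hδnot inferInstance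
  have hφ0 : ∀ v ∈ V, φ v = 0 := by
    intro v hv
    have : φ v ∈ V.map φ := Submodule.mem_map_of_mem hv
    rw [hφV] at this
    rwa [Submodule.mem_bot] at this
  refine ⟨fun j => φ (projMap F S (Pi.single j 1)), ?_, hφδ, ?_⟩
  · intro x hx
    have hxV : projMap F S x ∈ V := Submodule.mem_map_of_mem hx
    have hxsum : x = ∑ j, x j • (Pi.single j (1 : F) : Fin n → F) := by
      ext k
      simp [Pi.single_apply, Finset.sum_apply]
    calc ∑ j, φ (projMap F S (Pi.single j 1)) * x j
        = ∑ j, φ (projMap F S (x j • (Pi.single j (1 : F) : Fin n → F))) := by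
          simp [map_smul, smul_eq_mul, mul_comm]
      _ = φ (projMap F S (∑ j, x j • (Pi.single j (1 : F) : Fin n → F))) := by
          rw [map_sum, map_sum]
      _ = φ (projMap F S x) := by rw [← hxsum]
      _ = 0 := hφ0 _ hxV
  · have hsupp : (Finset.univ.filter fun j =>
        φ (projMap F S (Pi.single j 1)) ≠ 0) ⊆ S := by
      intro j hj
      rw [Finset.mem_filter] at hj
      by_contra hjS
      apply hj.2
      have : projMap F S (Pi.single j (1 : F)) = 0 := by
        ext ⟨k, hk⟩
        have : k ≠ j := fun hkj => hjS (hkj ▸ hk)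
        simp [projMap, LinearMap.funLeft, Pi.single_apply, this]
      rw [this, map_zero]
    have hcard : wt (fun j => φ (projMap F S (Pi.single j 1))) ≤ S.card :=
      Finset.card_le_card hsupp
    have hScard : S.card = R.card + 1 := Finset.card_insert_of_notMem hiR
    omega

end Aux

/-- Let `C` be a linear code of length `n` over the finite field `F_q` and let `i` be a
coordinate admitting a recovery set. Then `loc_i(C) = min { wt(w) − 1 : w ∈ C⊥, i ∈ supp(w) }`:
the minimum cardinality of a recovery set for `i` equals one less than the minimum weight of a
dual codeword whose support contains `i`. -/
theorem loci_eq_min_dual_weight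
    {F : Type*} [Field F] [Fintype F] [DecidableEq F] {n : ℕ}
    (C : Submodule F (Fin n → F)) (i : Fin n)
    (hrec : ∃ R : Finset (Fin n), IsRecoverySet F C i R) :
    loci F C i =
      sInf {c : ℕ | ∃ w : Fin n → F,
        (∀ x ∈ C, ∑ j, w j * x j = 0) ∧ w i ≠ 0 ∧ wt w - 1 = c} := by
  classical
  obtain ⟨R₀, hR₀⟩ := hrec
  obtain ⟨w₀, hw₀1, hw₀2, _⟩ := dual_of_recovery C i R₀ hR₀
  have hBne : {c : ℕ | ∃ w : Fin n → F,
      (∀ x ∈ C, ∑ j, w j * x j = 0) ∧ w i ≠ 0 ∧ wt w - 1 = c}.Nonempty :=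
    ⟨wt w₀ - 1, w₀, hw₀1, hw₀2, rfl⟩
  have hAne : {c : ℕ | ∃ R : Finset (Fin n), IsRecoverySet F C i R ∧ R.card = c}.Nonempty :=
    ⟨R₀.card, R₀, hR₀, rfl⟩
  apply le_antisymm
  · -- loci ≤ sInf B : the minimal dual codeword gives a recovery set of card wt w - 1
    obtain ⟨w, hw1, hw2, hw3⟩ := Nat.sInf_mem hBne
    have hRec := recovery_of_dual C i w hw1 hw2
    apply Nat.sInf_le
    refine ⟨_, hRec, ?_⟩
    rw [Finset.card_erase_of_mem (by simp [hw2])]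
    exact hw3
  · -- sInf B ≤ loci : the minimal recovery set gives a dual codeword of weight ≤ card + 1
    obtain ⟨R, hR, hcard⟩ := Nat.sInf_mem hAne
    obtain ⟨w, hw1, hw2, hw3⟩ := dual_of_recovery C i R hR
    calc sInf {c : ℕ | ∃ w : Fin n → F,
          (∀ x ∈ C, ∑ j, w j * x j = 0) ∧ w i ≠ 0 ∧ wt w - 1 = c}
        ≤ wt w - 1 := Nat.sInf_le ⟨w, hw1, hw2, rfl⟩
      _ ≤ R.card := hw3
      _ = loci F C i := hcard
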